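/- Let 0 → N' → N → N'' → 0 be a short exact sequence of modules over a commutative ring, let λ be a length function additive on short exact sequences with λ(N') = 0, and let a be a ring element. Then λ(aN) = λ(aN''), where aM denotes the image of multiplication by a on M. -/
import Mathlib


open scoped ENNReal

/-- Let `0 → N' → N → N'' → 0` be a short exact sequence of modules over a commutative
ring, let `λ` be a length function additive on short exact sequences with `λ(N') = 0`,
and let `a` be a ring element.  Then `λ(aN) = λ(aN'')`, where `aM` denotes the image of
multiplication by `a` on `M`. -/
theorem lambda_smul_eq_of_sub_zero
    (A : Type) [CommRing A]
    (lam : ∀ (N : Type) [AddCommGroup N] [Module A N], ℝ≥0∞)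
    (hadd : ∀ (M₁ M₂ M₃ : Type) [AddCommGroup M₁] [Module A M₁] [AddCommGroup M₂]
      [Module A M₂] [AddCommGroup M₃] [Module A M₃]
      (f : M₁ →ₗ[A] M₂) (g : M₂ →ₗ[A] M₃),
      Function.Injective f → Function.Surjective g → Function.Exact f g →
        lam M₂ = lam M₁ + lam M₃)
    (N' N N'' : Type) [AddCommGroup N'] [Module A N'] [AddCommGroup N] [Module A N]
    [AddCommGroup N''] [Module A N'']
    (f : N' →ₗ[A] N) (g : N →ₗ[A] N'')
    (hf : Function.Injective f) (hg : Function.Surjective g) (hfg : Function.Exact f g)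
    (hN' : lam N' = 0) (a : A) :
    lam (LinearMap.range (LinearMap.lsmul A N a)) =
      lam (LinearMap.range (LinearMap.lsmul A N'' a)) := by
  set P : Submodule A N := LinearMap.range (LinearMap.lsmul A N a) with hP
  set P'' : Submodule A N'' := LinearMap.range (LinearMap.lsmul A N'' a) with hP''
  set K : Submodule A N' := P.comap f with hK
  -- Step 1 : lam K = 0
  have h1 : lam N' = lam K + lam (N' ⧸ K) :=
    hadd _ _ _ K.subtype K.mkQ K.injective_subtype K.mkQ_surjective
      (LinearMap.exact_subtype_mkQ K)
  have hK0 : lam K = 0 := by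
    rw [hN'] at h1
    exact (add_eq_zero.mp h1.symm).1
  -- the restricted maps
  have hfr : ∀ x ∈ K, f x ∈ P := fun x hx => hx
  have hgr : ∀ x ∈ P, g x ∈ P'' := by
    rintro x ⟨n, rfl⟩
    exact ⟨g n, by simp⟩
  have hinj : Function.Injective (f.restrict hfr) := by
    intro x y hxy
    have : f x = f y := congrArg Subtype.val hxy
    exact Subtype.ext (hf this)
  have hsurj : Function.Surjective (g.restrict hgr) := by
    rintro ⟨y, m'', rfl⟩
    obtain ⟨n, rfl⟩ := hg m''
    refine ⟨⟨a • n, ⟨n, rfl⟩⟩, Subtype.ext ?_⟩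
    simp [LinearMap.restrict_apply]
  have hex : Function.Exact (f.restrict hfr) (g.restrict hgr) := by
    intro ⟨x, hx⟩
    constructor
    · intro h0
      have hx0 : g x = 0 := congrArg Subtype.val h0
      obtain ⟨y, hy⟩ := (hfg x).mp hx0
      refine ⟨⟨y, show f y ∈ P from hy ▸ hx⟩, Subtype.ext hy⟩
    · rintro ⟨⟨y, hy⟩, h⟩
      have : f y = x := congrArg Subtype.val h
      exact Subtype.ext (this ▸ (hfg (f y)).mpr ⟨y, rfl⟩)
  have h2 : lam P = lam K + lam P'' :=
    hadd _ _ _ (f.restrict hfr) (g.restrict hgr) hinj hsurj hex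
  rw [h2, hK0, zero_add]
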